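/- Let α ∈ (0,1) and T > 0. Assume f ∈ AC([0,T]) and t ↦ t^{1−α} f′(t) ∈ L^∞(0,T). Then there exists a constant c₀ depending only on α such that for all 0 ≤ t₁ ≤ t₂ ≤ T, |t₂^{1−α} (I^α f′)(t₂) − t₁^{1−α} (I^α f′)(t₁)| ≤ c₀ ‖t^{1−α} f′‖_{L^∞(0,T)} |t₂ − t₁|^α. In particular t ↦ t^{1−α} (I^α f′)(t) belongs to C^{0,α}([0,T]) (with value 0 at t = 0) and D^α f ∈ C^{0,1−α}_{loc}((0,T]). -/

import Mathlib

open MeasureTheory Set Filter intervalIntegral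
open scoped Topology NNReal ENNReal

/-- Riemann–Liouville fractional integral of order `β`:
`(I^β g)(t) = (1/Γ(β)) ∫₀^t (t-τ)^{β-1} g(τ) dτ`. -/
noncomputable def fracInt (β : ℝ) (g : ℝ → ℝ) (t : ℝ) : ℝ :=
  (1 / Real.Gamma β) * ∫ τ in (0:ℝ)..t, (t - τ) ^ (β - 1) * g τ

private lemma rpow_mvt {p x y : ℝ} (hx : 0 < x) (hxy : x ≤ y) (hp : p ≤ 1) :
    |y ^ p - x ^ p| ≤ |p| * x ^ (p - 1) * (y - x) := by
  rcases eq_or_lt_of_le hxy with rfl | hlt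
  · simp
  obtain ⟨c, hc, hslope⟩ := exists_hasDerivAt_eq_slope (fun t => t ^ p)
      (fun t => p * t ^ (p - 1)) hlt
      (fun t ht => (Real.continuousAt_rpow_const t p
        (Or.inl (lt_of_lt_of_le hx ht.1).ne')).continuousWithinAt)
      (fun t ht => Real.hasDerivAt_rpow_const (Or.inl (lt_of_lt_of_le hx ht.1.le).ne'))
  have hc0 : 0 < c := lt_of_lt_of_le hx hc.1.le
  have h1 : y ^ p - x ^ p = p * c ^ (p - 1) * (y - x) := by
    rw [hslope, div_mul_cancel₀ _ (sub_ne_zero.mpr hlt.ne')]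
  rw [h1, abs_mul, abs_mul, abs_of_nonneg (Real.rpow_nonneg hc0.le _),
    abs_of_nonneg (sub_nonneg.mpr hxy)]
  have h2 : c ^ (p - 1) ≤ x ^ (p - 1) :=
    Real.rpow_le_rpow_of_nonpos hx hc.1.le (by linarith)
  have := mul_le_mul_of_nonneg_left h2 (abs_nonneg p)
  nlinarith [abs_nonneg p, Real.rpow_nonneg hx.le (p - 1), sub_nonneg.mpr hxy]

private lemma rpow_subadd {x y p : ℝ} (hx : 0 ≤ x) (hy : 0 ≤ y) (hp0 : 0 ≤ p) (hp1 : p ≤ 1) :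
    (x + y) ^ p ≤ x ^ p + y ^ p := by
  have h := NNReal.rpow_add_le_add_rpow x.toNNReal y.toNNReal hp0 hp1
  have h2 := NNReal.coe_le_coe.mpr h
  rw [NNReal.coe_rpow, NNReal.coe_add, NNReal.coe_add, NNReal.coe_rpow, NNReal.coe_rpow,
    Real.coe_toNNReal _ hx, Real.coe_toNNReal _ hy] at h2
  exact h2

private lemma ker_intable {r : ℝ} (hr : -1 < r) (c a b : ℝ) :
    IntervalIntegrable (fun τ => (c - τ) ^ r) volume a b := by
  have h := (intervalIntegral.intervalIntegrable_rpow' (a := c - a) (b := c - b) hr).comp_sub_left c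
  simpa using h

private lemma ker_int {r : ℝ} (hr : -1 < r) (c a b : ℝ) :
    ∫ τ in a..b, (c - τ) ^ r = ((c - a) ^ (r + 1) - (c - b) ^ (r + 1)) / (r + 1) := by
  rw [intervalIntegral.integral_comp_sub_left (fun u => u ^ r) c,
    show ∫ x in (c-b)..(c-a), x ^ r = _ from integral_rpow (Or.inl hr)]

private lemma ker_cont {r c : ℝ} {s : Set ℝ} (h : ∀ τ ∈ s, τ ≠ c) :
    ContinuousOn (fun τ => (c - τ) ^ r) s := fun τ hτ =>
  ((Real.continuousAt_rpow_const (c - τ) r (Or.inl (sub_ne_zero.mpr (Ne.symm (h τ hτ))))).comp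
    ((continuous_const.sub continuous_id).continuousAt)).continuousWithinAt


private lemma MB {α T M : ℝ} {f' : ℝ → ℝ}
    (hf' : AEStronglyMeasurable f' (volume.restrict (Set.Ioc 0 T)))
    (hM : ∀ᵐ τ ∂(volume.restrict (Set.Ioo 0 T)), |f' τ| ≤ M * τ ^ (α - 1))
    {a b : ℝ} (ha : 0 ≤ a) (hab : a ≤ b) (hbT : b ≤ T)
    {K G : ℝ → ℝ} (hKm : ContinuousOn K (Set.Ioo a b))
    (hKG : ∀ τ ∈ Set.Ioo a b, |K τ| * (M * τ ^ (α - 1)) ≤ G τ)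
    (hG : IntervalIntegrable G volume a b) :
    IntervalIntegrable (fun τ => K τ * f' τ) volume a b ∧
      |∫ τ in a..b, K τ * f' τ| ≤ |∫ τ in a..b, G τ| := by
  have hM' : ∀ᵐ τ : ℝ, τ ∈ Set.Ioo 0 T → |f' τ| ≤ M * τ ^ (α - 1) :=
    (ae_restrict_iff' measurableSet_Ioo).mp hM
  have hrc : volume.restrict (Set.Ioc a b) = volume.restrict (Set.Ioo a b) :=
    (Measure.restrict_congr_set Ioo_ae_eq_Ioc).symm
  have hae : ∀ᵐ τ ∂(volume.restrict (Set.Ioc a b)), |K τ * f' τ| ≤ G τ := by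
    rw [hrc]
    filter_upwards [ae_restrict_mem measurableSet_Ioo, ae_restrict_of_ae hM'] with τ hτ hτM
    have hτ0 : τ ∈ Set.Ioo 0 T := ⟨lt_of_le_of_lt ha hτ.1, lt_of_lt_of_le hτ.2 hbT⟩
    calc |K τ * f' τ| = |K τ| * |f' τ| := abs_mul _ _
      _ ≤ |K τ| * (M * τ ^ (α - 1)) := mul_le_mul_of_nonneg_left (hτM hτ0) (abs_nonneg _)
      _ ≤ G τ := hKG τ hτ
  have hGi : IntegrableOn G (Set.Ioc a b) := hG.1
  have hKmeas : AEStronglyMeasurable K (volume.restrict (Set.Ioc a b)) := by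
    rw [hrc]; exact hKm.aestronglyMeasurable measurableSet_Ioo
  have hm : AEStronglyMeasurable (fun τ => K τ * f' τ) (volume.restrict (Set.Ioc a b)) :=
    hKmeas.mul (hf'.mono_measure (Measure.restrict_mono (Set.Ioc_subset_Ioc ha hbT) le_rfl))
  have hi : IntegrableOn (fun τ => K τ * f' τ) (Set.Ioc a b) :=
    Integrable.mono' hGi hm (by simpa only [Real.norm_eq_abs] using hae)
  have hii : IntervalIntegrable (fun τ => K τ * f' τ) volume a b :=
    (intervalIntegrable_iff_integrableOn_Ioc_of_le hab).mpr hi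
  refine ⟨hii, ?_⟩
  have h2 := intervalIntegral.norm_integral_le_abs_of_norm_le (μ := volume)
    (f := fun τ => K τ * f' τ) (g := G) (a := a) (b := b)
    (by simpa only [Real.norm_eq_abs, Set.uIoc_of_le hab] using hae) hG
  simpa only [Real.norm_eq_abs] using h2

private lemma A0B {α T M : ℝ} {f' : ℝ → ℝ} (hα0 : 0 < α) (hα1 : α < 1) (hM0 : 0 ≤ M)
    (hf' : AEStronglyMeasurable f' (volume.restrict (Set.Ioc 0 T)))
    (hM : ∀ᵐ τ ∂(volume.restrict (Set.Ioo 0 T)), |f' τ| ≤ M * τ ^ (α - 1))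
    {b c : ℝ} (hb : 0 < b) (hbc : b ≤ c) (hcT : c ≤ T) :
    IntervalIntegrable (fun τ => (c - τ) ^ (α - 1) * f' τ) volume 0 b ∧
      |∫ τ in (0:ℝ)..b, (c - τ) ^ (α - 1) * f' τ| ≤ 2 * (M * (b / 2) ^ (2 * α - 1) / α) := by
  have hexp : (-1:ℝ) < α - 1 := by linarith
  have hb2 : 0 < b / 2 := half_pos hb
  have hpow : (b/2) ^ (α-1) * (b/2) ^ α = (b/2) ^ (2*α-1) := by
    rw [← Real.rpow_add hb2, show α - 1 + α = 2*α-1 from by ring]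
  have P1 := MB (α := α) hf' hM (le_refl (0:ℝ)) hb2.le (by linarith)
    (K := fun τ => (c - τ) ^ (α - 1)) (G := fun τ => (b/2) ^ (α-1) * (M * τ ^ (α-1)))
    (ker_cont (fun τ hτ => by intro h; rw [h] at hτ; exact absurd hτ.2 (by linarith)))
    (fun τ hτ => by
      rw [abs_of_nonneg (Real.rpow_nonneg (by linarith [hτ.2] : (0:ℝ) ≤ c - τ) _)]
      exact mul_le_mul_of_nonneg_right
        (Real.rpow_le_rpow_of_nonpos hb2 (by linarith [hτ.2]) (by linarith))
        (mul_nonneg hM0 (Real.rpow_nonneg hτ.1.le _)))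
    (((intervalIntegrable_rpow' hexp).const_mul M).const_mul _)
  have V1 : ∫ τ in (0:ℝ)..(b/2), (b/2) ^ (α-1) * (M * τ ^ (α-1))
      = (b/2) ^ (α-1) * (M * ((b/2) ^ α / α)) := by
    rw [intervalIntegral.integral_const_mul, intervalIntegral.integral_const_mul,
      integral_rpow (Or.inl hexp), show α - 1 + 1 = α from by ring,
      Real.zero_rpow hα0.ne']
    ring
  have key1 : |∫ τ in (0:ℝ)..(b/2), (c - τ) ^ (α - 1) * f' τ| ≤ M * (b/2) ^ (2*α-1) / α := by
    have hnn : (0:ℝ) ≤ (b/2) ^ (α-1) * (M * ((b/2) ^ α / α)) :=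
      mul_nonneg (Real.rpow_nonneg hb2.le _)
        (mul_nonneg hM0 (div_nonneg (Real.rpow_nonneg hb2.le _) hα0.le))
    calc |∫ τ in (0:ℝ)..(b/2), (c - τ) ^ (α - 1) * f' τ|
        ≤ |(b/2) ^ (α-1) * (M * ((b/2) ^ α / α))| := by rw [← V1]; exact P1.2
      _ = M * ((b/2) ^ (α-1) * (b/2) ^ α) / α := by rw [abs_of_nonneg hnn]; ring
      _ = M * (b/2) ^ (2*α-1) / α := by rw [hpow]
  have P2 := MB (α := α) hf' hM hb2.le (by linarith : b/2 ≤ b) (by linarith)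
    (K := fun τ => (c - τ) ^ (α - 1)) (G := fun τ => (b - τ) ^ (α-1) * (M * (b/2) ^ (α-1)))
    (ker_cont (fun τ hτ => by intro h; rw [h] at hτ; exact absurd hτ.2 (by linarith)))
    (fun τ hτ => by
      have hτ0 : 0 < τ := lt_trans hb2 hτ.1
      rw [abs_of_nonneg (Real.rpow_nonneg (by linarith [hτ.2] : (0:ℝ) ≤ c - τ) _)]
      exact mul_le_mul
        (Real.rpow_le_rpow_of_nonpos (by linarith [hτ.2] : (0:ℝ) < b - τ) (by linarith)
          (by linarith))
        (mul_le_mul_of_nonneg_left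
          (Real.rpow_le_rpow_of_nonpos hb2 hτ.1.le (by linarith)) hM0)
        (mul_nonneg hM0 (Real.rpow_nonneg hτ0.le _))
        (Real.rpow_nonneg (by linarith [hτ.2]) _))
    ((ker_intable hexp b _ _).mul_const _)
  have V2 : ∫ τ in (b/2)..b, (b - τ) ^ (α-1) * (M * (b/2) ^ (α-1))
      = ((b/2) ^ α / α) * (M * (b/2) ^ (α-1)) := by
    rw [intervalIntegral.integral_mul_const, ker_int hexp b (b/2) b,
      show α - 1 + 1 = α from by ring, show b - b/2 = b/2 from by ring, sub_self,
      Real.zero_rpow hα0.ne']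
    ring
  have key2 : |∫ τ in (b/2)..b, (c - τ) ^ (α - 1) * f' τ| ≤ M * (b/2) ^ (2*α-1) / α := by
    have hnn : (0:ℝ) ≤ ((b/2) ^ α / α) * (M * (b/2) ^ (α-1)) :=
      mul_nonneg (div_nonneg (Real.rpow_nonneg hb2.le _) hα0.le)
        (mul_nonneg hM0 (Real.rpow_nonneg hb2.le _))
    calc |∫ τ in (b/2)..b, (c - τ) ^ (α - 1) * f' τ|
        ≤ |((b/2) ^ α / α) * (M * (b/2) ^ (α-1))| := by rw [← V2]; exact P2.2
      _ = M * ((b/2) ^ (α-1) * (b/2) ^ α) / α := by rw [abs_of_nonneg hnn]; ring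
      _ = M * (b/2) ^ (2*α-1) / α := by rw [hpow]
  have hsplit := integral_add_adjacent_intervals P1.1 P2.1
  refine ⟨P1.1.trans P2.1, ?_⟩
  rw [← hsplit]
  calc |(∫ τ in (0:ℝ)..(b/2), (c - τ) ^ (α - 1) * f' τ)
        + ∫ τ in (b/2)..b, (c - τ) ^ (α - 1) * f' τ|
      ≤ |∫ τ in (0:ℝ)..(b/2), (c - τ) ^ (α - 1) * f' τ|
        + |∫ τ in (b/2)..b, (c - τ) ^ (α - 1) * f' τ| := abs_add_le _ _
    _ ≤ M * (b/2) ^ (2*α-1) / α + M * (b/2) ^ (2*α-1) / α := add_le_add key1 key2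
    _ = 2 * (M * (b/2) ^ (2*α-1) / α) := by ring

private lemma FB {α T M : ℝ} {f' : ℝ → ℝ} (hα0 : 0 < α) (hα1 : α < 1) (hM0 : 0 ≤ M)
    (hf' : AEStronglyMeasurable f' (volume.restrict (Set.Ioc 0 T)))
    (hM : ∀ᵐ τ ∂(volume.restrict (Set.Ioo 0 T)), |f' τ| ≤ M * τ ^ (α - 1))
    {t : ℝ} (ht0 : 0 ≤ t) (htT : t ≤ T) :
    |t ^ (1-α) * fracInt α f' t| ≤ 4 / (α * Real.Gamma α) * M * t ^ α := by
  have hΓ : 0 < Real.Gamma α := Real.Gamma_pos_of_pos hα0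
  rcases eq_or_lt_of_le ht0 with rfl | ht
  · rw [Real.zero_rpow (by intro hc; linarith [hc] : (1:ℝ) - α ≠ 0), Real.zero_rpow hα0.ne']
    simp
  · have hJ := (A0B hα0 hα1 hM0 hf' hM ht le_rfl htT).2
    have key : t ^ (1-α) * (t/2) ^ (2*α-1) ≤ 2 * t ^ α := by
      rw [Real.div_rpow ht0 (by norm_num : (0:ℝ) ≤ 2), ← mul_div_assoc, ← Real.rpow_add ht,
        show 1 - α + (2*α-1) = α from by ring, div_le_iff₀ (Real.rpow_pos_of_pos two_pos _)]
      have h1 : (1:ℝ)/2 ≤ 2 ^ (2*α-1) := by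
        have h2 : (2:ℝ)^(-1:ℝ) ≤ 2^(2*α-1) :=
          Real.rpow_le_rpow_of_exponent_le one_le_two (by linarith)
        rwa [Real.rpow_neg_one, show ((2:ℝ))⁻¹ = 1/2 from by norm_num] at h2
      nlinarith [Real.rpow_nonneg ht0 α]
    have habs : |t ^ (1-α) * fracInt α f' t|
        = t^(1-α) * (1/Real.Gamma α * |∫ τ in (0:ℝ)..t, (t - τ)^(α-1) * f' τ|) := by
      rw [fracInt, abs_mul, abs_mul, abs_of_nonneg (Real.rpow_nonneg ht0 _),
        abs_of_nonneg (by positivity : (0:ℝ) ≤ 1/Real.Gamma α)]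
    rw [habs]
    calc t^(1-α) * (1/Real.Gamma α * |∫ τ in (0:ℝ)..t, (t - τ)^(α-1) * f' τ|)
        ≤ t^(1-α) * (1/Real.Gamma α * (2 * (M * (t/2)^(2*α-1)/α))) :=
          mul_le_mul_of_nonneg_left (mul_le_mul_of_nonneg_left hJ (by positivity))
            (Real.rpow_nonneg ht0 _)
      _ = (2*M/(α*Real.Gamma α)) * (t^(1-α) * (t/2)^(2*α-1)) := by ring
      _ ≤ (2*M/(α*Real.Gamma α)) * (2 * t^α) :=
          mul_le_mul_of_nonneg_left key (by positivity)
      _ = 4/(α*Real.Gamma α) * M * t^α := by ring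

private lemma EST1 {α T M : ℝ} {f' : ℝ → ℝ} (hα0 : 0 < α) (hα1 : α < 1) (hM0 : 0 ≤ M)
    (hf' : AEStronglyMeasurable f' (volume.restrict (Set.Ioc 0 T)))
    (hM : ∀ᵐ τ ∂(volume.restrict (Set.Ioo 0 T)), |f' τ| ≤ M * τ ^ (α - 1))
    {t₁ t₂ : ℝ} (h10 : 0 ≤ t₁) (h2T : t₂ ≤ T) (h12 : t₁ ≤ t₂) :
    |t₂ ^ (1 - α) * fracInt α f' t₂ - t₁ ^ (1 - α) * fracInt α f' t₁|
      ≤ 12 / (α * Real.Gamma α) * M * (t₂ - t₁) ^ α := by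
  have hΓ : 0 < Real.Gamma α := Real.Gamma_pos_of_pos hα0
  have h1T : t₁ ≤ T := le_trans h12 h2T
  have h20 : 0 ≤ t₂ := le_trans h10 h12
  have hexp : (-1:ℝ) < α - 1 := by linarith
  rcases eq_or_lt_of_le h12 with rfl | hlt
  · simp [sub_self, Real.zero_rpow hα0.ne']
  have hpos : (0:ℝ) < t₂ - t₁ := sub_pos.2 hlt
  by_cases hcase : t₁ ≤ t₂ - t₁
  · -- Case A : t₁ small
    have hb2 := FB hα0 hα1 hM0 hf' hM h20 h2T
    have hb1 := FB hα0 hα1 hM0 hf' hM h10 h1T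
    have e2 : t₂ ^ α ≤ 2 * (t₂ - t₁) ^ α := by
      calc t₂ ^ α ≤ (2*(t₂ - t₁)) ^ α := Real.rpow_le_rpow h20 (by linarith) hα0.le
        _ = 2^α * (t₂ - t₁)^α := Real.mul_rpow (by norm_num) hpos.le
        _ ≤ 2 * (t₂ - t₁)^α := by
            have h22 : (2:ℝ)^α ≤ 2 := by
              calc (2:ℝ)^α ≤ 2^(1:ℝ) :=
                    Real.rpow_le_rpow_of_exponent_le one_le_two hα1.le
                _ = 2 := Real.rpow_one 2
            exact mul_le_mul_of_nonneg_right h22 (Real.rpow_nonneg hpos.le _)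
    have e1 : t₁ ^ α ≤ (t₂ - t₁) ^ α := Real.rpow_le_rpow h10 hcase hα0.le
    have c2 : 4/(α*Real.Gamma α)*M*t₂^α ≤ 4/(α*Real.Gamma α)*M*(2*(t₂ - t₁)^α) :=
      mul_le_mul_of_nonneg_left e2 (by positivity)
    have c1 : 4/(α*Real.Gamma α)*M*t₁^α ≤ 4/(α*Real.Gamma α)*M*((t₂ - t₁)^α) :=
      mul_le_mul_of_nonneg_left e1 (by positivity)
    calc |t₂ ^ (1 - α) * fracInt α f' t₂ - t₁ ^ (1 - α) * fracInt α f' t₁|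
        ≤ |t₂ ^ (1 - α) * fracInt α f' t₂| + |t₁ ^ (1 - α) * fracInt α f' t₁| := abs_sub _ _
      _ ≤ 4/(α*Real.Gamma α)*M*t₂^α + 4/(α*Real.Gamma α)*M*t₁^α := add_le_add hb2 hb1
      _ ≤ 4/(α*Real.Gamma α)*M*(2*(t₂ - t₁)^α) + 4/(α*Real.Gamma α)*M*((t₂ - t₁)^α) :=
          add_le_add c2 c1
      _ = 12 / (α * Real.Gamma α) * M * (t₂ - t₁) ^ α := by ring
  · -- Case B
    push_neg at hcase
    have ht₁ : 0 < t₁ := lt_trans hpos hcase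
    have ht₁2 : 0 < t₁/2 := half_pos ht₁
    have PA0 := A0B hα0 hα1 hM0 hf' hM ht₁ h12 h2T
    have PJ1 := A0B hα0 hα1 hM0 hf' hM ht₁ le_rfl h1T
    have PA1 := MB (α := α) hf' hM (le_of_lt ht₁) h12 h2T
      (K := fun τ => (t₂ - τ) ^ (α - 1))
      (G := fun τ => (t₂ - τ) ^ (α - 1) * (M * t₁ ^ (α-1)))
      (ker_cont (fun τ hτ => by intro hc; rw [hc] at hτ; exact absurd hτ.2 (lt_irrefl _)))
      (fun τ hτ => by
        rw [abs_of_nonneg (Real.rpow_nonneg (by linarith [hτ.2] : (0:ℝ) ≤ t₂ - τ) _)]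
        exact mul_le_mul_of_nonneg_left
          (mul_le_mul_of_nonneg_left
            (Real.rpow_le_rpow_of_nonpos ht₁ hτ.1.le (by linarith)) hM0)
          (Real.rpow_nonneg (by linarith [hτ.2]) _))
      ((ker_intable hexp t₂ _ _).mul_const _)
    have PD1 := MB (α := α) hf' hM (le_refl (0:ℝ)) ht₁2.le (by linarith)
      (K := fun τ => (t₂ - τ) ^ (α - 1) - (t₁ - τ) ^ (α - 1))
      (G := fun τ => ((t₁/2) ^ (α-2) * (t₂ - t₁)) * (M * τ ^ (α-1)))
      (((ker_cont (fun τ hτ => by intro hc; rw [hc] at hτ; exact absurd hτ.2 (by linarith))).sub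
        (ker_cont (fun τ hτ => by intro hc; rw [hc] at hτ; exact absurd hτ.2 (by linarith)))))
      (fun τ hτ => by
        have h1τ : 0 < t₁ - τ := by linarith [hτ.2]
        have mv := rpow_mvt (p := α - 1) (x := t₁ - τ) (y := t₂ - τ) h1τ
          (by linarith) (by linarith)
        have e : |(t₂ - τ) ^ (α - 1) - (t₁ - τ) ^ (α - 1)| ≤ (t₁/2) ^ (α-2) * (t₂ - t₁) := by
          have e1 : |α - 1| ≤ 1 := by rw [abs_of_nonpos (by linarith)]; linarith
          have e2 : (t₁ - τ)^(α-1-1) ≤ (t₁/2)^(α-2) := by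
            rw [show α - 1 - 1 = α - 2 from by ring]
            exact Real.rpow_le_rpow_of_nonpos ht₁2 (by linarith [hτ.2]) (by linarith)
          have e3 : t₂ - τ - (t₁ - τ) = t₂ - t₁ := by ring
          rw [e3] at mv
          calc |(t₂ - τ) ^ (α - 1) - (t₁ - τ) ^ (α - 1)|
              ≤ |α - 1| * (t₁ - τ)^(α-1-1) * (t₂ - t₁) := mv
            _ ≤ 1 * ((t₁/2)^(α-2)) * (t₂ - t₁) := by
                apply mul_le_mul_of_nonneg_right _ hpos.le
                exact mul_le_mul e1 e2 (Real.rpow_nonneg h1τ.le _) one_pos.le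
            _ = (t₁/2) ^ (α-2) * (t₂ - t₁) := by ring
        exact mul_le_mul_of_nonneg_right e (mul_nonneg hM0 (Real.rpow_nonneg hτ.1.le _)))
      (((intervalIntegrable_rpow' hexp).const_mul M).const_mul _)
    have PD2 := MB (α := α) hf' hM ht₁2.le (by linarith : t₁/2 ≤ t₁) h1T
      (K := fun τ => (t₂ - τ) ^ (α - 1) - (t₁ - τ) ^ (α - 1))
      (G := fun τ => ((t₁ - τ) ^ (α-1) - (t₂ - τ) ^ (α-1)) * (M * (t₁/2) ^ (α-1)))
      (((ker_cont (fun τ hτ => by intro hc; rw [hc] at hτ; exact absurd hτ.2 (by linarith))).sub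
        (ker_cont (fun τ hτ => by intro hc; rw [hc] at hτ; exact absurd hτ.2 (lt_irrefl _)))))
      (fun τ hτ => by
        have h1τ : 0 < t₁ - τ := by linarith [hτ.2]
        have habs : |(t₂ - τ) ^ (α - 1) - (t₁ - τ) ^ (α - 1)|
            = (t₁ - τ) ^ (α-1) - (t₂ - τ) ^ (α-1) := by
          rw [abs_of_nonpos (sub_nonpos.2
            (Real.rpow_le_rpow_of_nonpos h1τ (by linarith) (by linarith))), neg_sub]
        rw [habs]
        have hKnn : (0:ℝ) ≤ (t₁ - τ) ^ (α-1) - (t₂ - τ) ^ (α-1) := by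
          rw [← habs]; exact abs_nonneg _
        exact mul_le_mul_of_nonneg_left
          (mul_le_mul_of_nonneg_left
            (Real.rpow_le_rpow_of_nonpos ht₁2 hτ.1.le (by linarith)) hM0) hKnn)
      (((ker_intable hexp t₁ _ _).sub (ker_intable hexp t₂ _ _)).mul_const _)
    -- values of comparison integrals
    have VA1 : ∫ τ in t₁..t₂, (t₂ - τ) ^ (α - 1) * (M * t₁ ^ (α-1))
        = ((t₂ - t₁)^α/α) * (M * t₁ ^ (α-1)) := by
      rw [intervalIntegral.integral_mul_const, ker_int hexp t₂ t₁ t₂,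
        show α - 1 + 1 = α from by ring, sub_self, Real.zero_rpow hα0.ne']
      ring
    have VD1 : ∫ τ in (0:ℝ)..(t₁/2), ((t₁/2) ^ (α-2) * (t₂ - t₁)) * (M * τ ^ (α-1))
        = ((t₁/2) ^ (α-2) * (t₂ - t₁)) * (M * ((t₁/2)^α/α)) := by
      rw [intervalIntegral.integral_const_mul, intervalIntegral.integral_const_mul,
        integral_rpow (Or.inl hexp), show α - 1 + 1 = α from by ring,
        Real.zero_rpow hα0.ne']
      ring
    have VD2 : ∫ τ in (t₁/2)..t₁, ((t₁ - τ) ^ (α-1) - (t₂ - τ) ^ (α-1)) * (M * (t₁/2) ^ (α-1))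
        = (((t₁/2)^α - ((t₂ - t₁/2)^α - (t₂ - t₁)^α))/α) * (M * (t₁/2) ^ (α-1)) := by
      rw [intervalIntegral.integral_mul_const, intervalIntegral.integral_sub
        (ker_intable hexp t₁ _ _) (ker_intable hexp t₂ _ _), ker_int hexp t₁ (t₁/2) t₁,
        ker_int hexp t₂ (t₁/2) t₁, show α - 1 + 1 = α from by ring, sub_self,
        Real.zero_rpow hα0.ne', show t₁ - t₁/2 = t₁/2 from by ring]
      ring
    have hXnn : (0:ℝ) ≤ (t₁/2)^α - ((t₂ - t₁/2)^α - (t₂ - t₁)^α) := by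
      have hsub : (t₂ - t₁/2)^α ≤ (t₁/2)^α + (t₂ - t₁)^α := by
        rw [show t₂ - t₁/2 = t₁/2 + (t₂ - t₁) from by ring]
        exact rpow_subadd ht₁2.le hpos.le hα0.le hα1.le
      linarith
    have hXle : (t₁/2)^α - ((t₂ - t₁/2)^α - (t₂ - t₁)^α) ≤ (t₂ - t₁)^α := by
      have hmono : (t₁/2)^α ≤ (t₂ - t₁/2)^α :=
        Real.rpow_le_rpow ht₁2.le (by linarith) hα0.le
      linarith
    have bA1 : |∫ τ in t₁..t₂, (t₂ - τ) ^ (α - 1) * f' τ|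
        ≤ ((t₂ - t₁)^α/α) * (M * t₁ ^ (α-1)) := by
      have h2 := PA1.2
      rw [VA1, abs_of_nonneg (mul_nonneg (div_nonneg (Real.rpow_nonneg hpos.le _) hα0.le)
        (mul_nonneg hM0 (Real.rpow_nonneg ht₁.le _)))] at h2
      exact h2
    have bD1 : |∫ τ in (0:ℝ)..(t₁/2), ((t₂ - τ) ^ (α - 1) - (t₁ - τ) ^ (α - 1)) * f' τ|
        ≤ ((t₁/2) ^ (α-2) * (t₂ - t₁)) * (M * ((t₁/2)^α/α)) := by
      have h2 := PD1.2
      rw [VD1, abs_of_nonneg (mul_nonneg (mul_nonneg (Real.rpow_nonneg ht₁2.le _) hpos.le)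
        (mul_nonneg hM0 (div_nonneg (Real.rpow_nonneg ht₁2.le _) hα0.le)))] at h2
      exact h2
    have bD2 : |∫ τ in (t₁/2)..t₁, ((t₂ - τ) ^ (α - 1) - (t₁ - τ) ^ (α - 1)) * f' τ|
        ≤ ((t₂ - t₁)^α/α) * (M * (t₁/2) ^ (α-1)) := by
      have h2 := PD2.2
      rw [VD2, abs_of_nonneg (mul_nonneg (div_nonneg hXnn hα0.le)
        (mul_nonneg hM0 (Real.rpow_nonneg ht₁2.le _)))] at h2
      refine h2.trans (mul_le_mul_of_nonneg_right ?_
        (mul_nonneg hM0 (Real.rpow_nonneg ht₁2.le _)))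
      exact (div_le_div_iff_of_pos_right hα0).mpr hXle
    -- decomposition
    have hJ2 : (∫ τ in (0:ℝ)..t₂, (t₂ - τ) ^ (α - 1) * f' τ)
        = (∫ τ in (0:ℝ)..t₁, (t₂ - τ) ^ (α - 1) * f' τ)
          + ∫ τ in t₁..t₂, (t₂ - τ) ^ (α - 1) * f' τ :=
      (integral_add_adjacent_intervals PA0.1 PA1.1).symm
    have hDd : (∫ τ in (0:ℝ)..(t₁/2), ((t₂ - τ) ^ (α - 1) - (t₁ - τ) ^ (α - 1)) * f' τ)
          + (∫ τ in (t₁/2)..t₁, ((t₂ - τ) ^ (α - 1) - (t₁ - τ) ^ (α - 1)) * f' τ)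
        = (∫ τ in (0:ℝ)..t₁, (t₂ - τ) ^ (α - 1) * f' τ)
          - ∫ τ in (0:ℝ)..t₁, (t₁ - τ) ^ (α - 1) * f' τ := by
      rw [integral_add_adjacent_intervals PD1.1 PD2.1,
        show (fun τ => ((t₂ - τ) ^ (α - 1) - (t₁ - τ) ^ (α - 1)) * f' τ)
          = fun τ => (t₂ - τ) ^ (α - 1) * f' τ - (t₁ - τ) ^ (α - 1) * f' τ
          from funext fun τ => by ring]
      exact intervalIntegral.integral_sub PA0.1 PJ1.1
    have hdec : t₂ ^ (1 - α) * fracInt α f' t₂ - t₁ ^ (1 - α) * fracInt α f' t₁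
        = (1/Real.Gamma α) * (t₂^(1-α) * (∫ τ in t₁..t₂, (t₂ - τ) ^ (α - 1) * f' τ))
          + (1/Real.Gamma α) * ((t₂^(1-α) - t₁^(1-α))
              * (∫ τ in (0:ℝ)..t₁, (t₂ - τ) ^ (α - 1) * f' τ))
          + (1/Real.Gamma α) * (t₁^(1-α)
              * ((∫ τ in (0:ℝ)..(t₁/2), ((t₂ - τ) ^ (α - 1) - (t₁ - τ) ^ (α - 1)) * f' τ)
                + (∫ τ in (t₁/2)..t₁, ((t₂ - τ) ^ (α - 1) - (t₁ - τ) ^ (α - 1)) * f' τ))) := by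
      simp only [fracInt]
      rw [hJ2, hDd]
      ring
    -- rpow arithmetic
    have hinv1 : ((2:ℝ)^(α-1))⁻¹ ≤ 2 := by
      have h2 : (2:ℝ)^(-1:ℝ) ≤ 2^(α-1) :=
        Real.rpow_le_rpow_of_exponent_le one_le_two (by linarith)
      rw [Real.rpow_neg_one] at h2
      calc ((2:ℝ)^(α-1))⁻¹ ≤ ((2:ℝ)⁻¹)⁻¹ :=
            inv_anti₀ (by norm_num) h2
        _ = 2 := by norm_num
    have hinv2 : ((2:ℝ)^(2*α-1))⁻¹ ≤ 2 := by
      have h2 : (2:ℝ)^(-1:ℝ) ≤ 2^(2*α-1) :=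
        Real.rpow_le_rpow_of_exponent_le one_le_two (by linarith)
      rw [Real.rpow_neg_one] at h2
      calc ((2:ℝ)^(2*α-1))⁻¹ ≤ ((2:ℝ)⁻¹)⁻¹ :=
            inv_anti₀ (by norm_num) h2
        _ = 2 := by norm_num
    have hinv3 : ((2:ℝ)^(2*α-2))⁻¹ ≤ 4 := by
      have h2 : (2:ℝ)^(-2:ℝ) ≤ 2^(2*α-2) :=
        Real.rpow_le_rpow_of_exponent_le one_le_two (by linarith)
      have h3 : (2:ℝ)^(-2:ℝ) = 1/4 := by
        rw [show (-2:ℝ) = ((-2:ℤ):ℝ) from by norm_num, Real.rpow_intCast]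
        norm_num
      rw [h3] at h2
      calc ((2:ℝ)^(2*α-2))⁻¹ ≤ ((1:ℝ)/4)⁻¹ :=
            inv_anti₀ (by norm_num) h2
        _ = 4 := by norm_num
    have ht1h : t₁^(α-1) ≤ (t₂ - t₁)^(α-1) :=
      Real.rpow_le_rpow_of_nonpos hpos hcase.le (by linarith)
    have hhh : (t₂ - t₁)^(α-1) * (t₂ - t₁) = (t₂ - t₁)^α := by
      rw [← Real.rpow_add_one hpos.ne' (α-1)]
      congr 1
      ring
    have p1 : t₂^(1-α) * t₁^(α-1) ≤ 2 := by
      have e1 : t₂^(1-α) ≤ 2^(1-α) * t₁^(1-α) := by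
        rw [← Real.mul_rpow (by norm_num) ht₁.le]
        exact Real.rpow_le_rpow h20 (by linarith) (by linarith)
      have e2 : t₁^(1-α) * t₁^(α-1) = 1 := by
        rw [← Real.rpow_add ht₁, show 1 - α + (α-1) = 0 from by ring, Real.rpow_zero]
      have e3 : (2:ℝ)^(1-α) ≤ 2 := by
        calc (2:ℝ)^(1-α) ≤ 2^(1:ℝ) :=
              Real.rpow_le_rpow_of_exponent_le one_le_two (by linarith)
          _ = 2 := Real.rpow_one 2
      calc t₂^(1-α) * t₁^(α-1) ≤ (2^(1-α) * t₁^(1-α)) * t₁^(α-1) :=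
            mul_le_mul_of_nonneg_right e1 (Real.rpow_nonneg ht₁.le _)
        _ = 2^(1-α) * (t₁^(1-α) * t₁^(α-1)) := by ring
        _ = 2^(1-α) := by rw [e2, mul_one]
        _ ≤ 2 := e3
    have p2 : t₂^(1-α) - t₁^(1-α) ≤ t₁^(-α) * (t₂ - t₁) := by
      have mv := rpow_mvt (p := 1 - α) (x := t₁) (y := t₂) ht₁ h12 (by linarith)
      have e1 : |1 - α| ≤ 1 := by rw [abs_of_nonneg (by linarith)]; linarith
      have e2 : (1 - α) - 1 = -α := by ring
      rw [e2] at mv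
      calc t₂^(1-α) - t₁^(1-α) ≤ |t₂^(1-α) - t₁^(1-α)| := le_abs_self _
        _ ≤ |1 - α| * t₁^(-α) * (t₂ - t₁) := mv
        _ ≤ 1 * t₁^(-α) * (t₂ - t₁) := by
            apply mul_le_mul_of_nonneg_right _ hpos.le
            exact mul_le_mul_of_nonneg_right e1 (Real.rpow_nonneg ht₁.le _)
        _ = t₁^(-α) * (t₂ - t₁) := by ring
    have p3 : t₁^(-α) * (t₁/2)^(2*α-1) ≤ 2 * (t₂ - t₁)^(α-1) := by
      have e1 : (t₁/2)^(2*α-1) = t₁^(2*α-1) * ((2:ℝ)^(2*α-1))⁻¹ := by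
        rw [Real.div_rpow ht₁.le (by norm_num : (0:ℝ) ≤ 2), div_eq_mul_inv]
      have e2 : t₁^(-α) * t₁^(2*α-1) = t₁^(α-1) := by
        rw [← Real.rpow_add ht₁, show -α + (2*α-1) = α - 1 from by ring]
      calc t₁^(-α) * (t₁/2)^(2*α-1) = (t₁^(-α) * t₁^(2*α-1)) * ((2:ℝ)^(2*α-1))⁻¹ := by
            rw [e1]; ring
        _ = t₁^(α-1) * ((2:ℝ)^(2*α-1))⁻¹ := by rw [e2]
        _ ≤ (t₂ - t₁)^(α-1) * 2 :=
            mul_le_mul ht1h hinv2 (inv_nonneg.2 (Real.rpow_nonneg (by norm_num) _))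
              (Real.rpow_nonneg hpos.le _)
        _ = 2 * (t₂ - t₁)^(α-1) := by ring
    have p4 : t₁^(1-α) * ((t₁/2)^(α-2) * (t₁/2)^α) ≤ 4 * (t₂ - t₁)^(α-1) := by
      have e0 : (t₁/2)^(α-2) * (t₁/2)^α = (t₁/2)^(2*α-2) := by
        rw [← Real.rpow_add ht₁2, show α - 2 + α = 2*α-2 from by ring]
      have e1 : (t₁/2)^(2*α-2) = t₁^(2*α-2) * ((2:ℝ)^(2*α-2))⁻¹ := by
        rw [Real.div_rpow ht₁.le (by norm_num : (0:ℝ) ≤ 2), div_eq_mul_inv]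
      have e2 : t₁^(1-α) * t₁^(2*α-2) = t₁^(α-1) := by
        rw [← Real.rpow_add ht₁, show 1-α + (2*α-2) = α - 1 from by ring]
      calc t₁^(1-α) * ((t₁/2)^(α-2) * (t₁/2)^α)
          = (t₁^(1-α) * t₁^(2*α-2)) * ((2:ℝ)^(2*α-2))⁻¹ := by rw [e0, e1]; ring
        _ = t₁^(α-1) * ((2:ℝ)^(2*α-2))⁻¹ := by rw [e2]
        _ ≤ (t₂ - t₁)^(α-1) * 4 :=
            mul_le_mul ht1h hinv3 (inv_nonneg.2 (Real.rpow_nonneg (by norm_num) _))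
              (Real.rpow_nonneg hpos.le _)
        _ = 4 * (t₂ - t₁)^(α-1) := by ring
    have p5 : t₁^(1-α) * (t₁/2)^(α-1) ≤ 2 := by
      have e1 : (t₁/2)^(α-1) = t₁^(α-1) * ((2:ℝ)^(α-1))⁻¹ := by
        rw [Real.div_rpow ht₁.le (by norm_num : (0:ℝ) ≤ 2), div_eq_mul_inv]
      have e2 : t₁^(1-α) * t₁^(α-1) = 1 := by
        rw [← Real.rpow_add ht₁, show 1 - α + (α-1) = 0 from by ring, Real.rpow_zero]
      calc t₁^(1-α) * (t₁/2)^(α-1) = (t₁^(1-α) * t₁^(α-1)) * ((2:ℝ)^(α-1))⁻¹ := by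
            rw [e1]; ring
        _ = ((2:ℝ)^(α-1))⁻¹ := by rw [e2, one_mul]
        _ ≤ 2 := hinv1
    -- final assembly
    set I1 := ∫ τ in t₁..t₂, (t₂ - τ) ^ (α - 1) * f' τ with hI1
    set I0 := ∫ τ in (0:ℝ)..t₁, (t₂ - τ) ^ (α - 1) * f' τ with hI0
    set Id1 := ∫ τ in (0:ℝ)..(t₁/2), ((t₂ - τ) ^ (α - 1) - (t₁ - τ) ^ (α - 1)) * f' τ with hId1
    set Id2 := ∫ τ in (t₁/2)..t₁, ((t₂ - τ) ^ (α - 1) - (t₁ - τ) ^ (α - 1)) * f' τ with hId2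
    have T1 : t₂^(1-α) * |I1| ≤ 2 * (M * (t₂ - t₁)^α / α) := by
      calc t₂^(1-α) * |I1| ≤ t₂^(1-α) * (((t₂ - t₁)^α/α) * (M * t₁ ^ (α-1))) :=
            mul_le_mul_of_nonneg_left bA1 (Real.rpow_nonneg h20 _)
        _ = (t₂^(1-α) * t₁^(α-1)) * (M * (t₂ - t₁)^α / α) := by ring
        _ ≤ 2 * (M * (t₂ - t₁)^α / α) :=
            mul_le_mul_of_nonneg_right p1 (by positivity)
    have T2 : (t₂^(1-α) - t₁^(1-α)) * |I0| ≤ 4 * (M * (t₂ - t₁)^α / α) := by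
      have bA0 := PA0.2
      have hnn2 : (0:ℝ) ≤ t₁^(-α) * (t₂-t₁) :=
        mul_nonneg (Real.rpow_nonneg ht₁.le _) hpos.le
      calc (t₂^(1-α) - t₁^(1-α)) * |I0|
          ≤ (t₁^(-α) * (t₂-t₁)) * (2 * (M * (t₁/2)^(2*α-1)/α)) :=
            mul_le_mul p2 bA0 (abs_nonneg _) hnn2
        _ = (t₁^(-α) * (t₁/2)^(2*α-1)) * (2 * M * (t₂-t₁) / α) := by ring
        _ ≤ (2 * (t₂ - t₁)^(α-1)) * (2 * M * (t₂-t₁) / α) :=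
            mul_le_mul_of_nonneg_right p3 (by positivity)
        _ = 4 * (M * ((t₂-t₁)^(α-1) * (t₂-t₁)) / α) := by ring
        _ = 4 * (M * (t₂ - t₁)^α / α) := by rw [hhh]
    have T3 : t₁^(1-α) * |Id1| ≤ 4 * (M * (t₂ - t₁)^α / α) := by
      calc t₁^(1-α) * |Id1|
          ≤ t₁^(1-α) * (((t₁/2) ^ (α-2) * (t₂ - t₁)) * (M * ((t₁/2)^α/α))) :=
            mul_le_mul_of_nonneg_left bD1 (Real.rpow_nonneg ht₁.le _)
        _ = (t₁^(1-α) * ((t₁/2)^(α-2) * (t₁/2)^α)) * (M * (t₂-t₁) / α) := by ring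
        _ ≤ (4 * (t₂ - t₁)^(α-1)) * (M * (t₂-t₁) / α) :=
            mul_le_mul_of_nonneg_right p4 (by positivity)
        _ = 4 * (M * ((t₂-t₁)^(α-1) * (t₂-t₁)) / α) := by ring
        _ = 4 * (M * (t₂ - t₁)^α / α) := by rw [hhh]
    have T4 : t₁^(1-α) * |Id2| ≤ 2 * (M * (t₂ - t₁)^α / α) := by
      calc t₁^(1-α) * |Id2|
          ≤ t₁^(1-α) * (((t₂ - t₁)^α/α) * (M * (t₁/2) ^ (α-1))) :=
            mul_le_mul_of_nonneg_left bD2 (Real.rpow_nonneg ht₁.le _)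
        _ = (t₁^(1-α) * (t₁/2)^(α-1)) * (M * (t₂ - t₁)^α / α) := by ring
        _ ≤ 2 * (M * (t₂ - t₁)^α / α) :=
            mul_le_mul_of_nonneg_right p5 (by positivity)
    have hr1 : (0:ℝ) ≤ t₂^(1-α) - t₁^(1-α) :=
      sub_nonneg.2 (Real.rpow_le_rpow h10 h12 (by linarith))
    rw [hdec]
    have hB1 : |(1/Real.Gamma α) * (t₂^(1-α) * I1)| ≤ (1/Real.Gamma α) * (t₂^(1-α) * |I1|) := by
      rw [abs_mul, abs_mul, abs_of_nonneg (by positivity : (0:ℝ) ≤ 1/Real.Gamma α),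
        abs_of_nonneg (Real.rpow_nonneg h20 _)]
    have hB2 : |(1/Real.Gamma α) * ((t₂^(1-α) - t₁^(1-α)) * I0)|
        ≤ (1/Real.Gamma α) * ((t₂^(1-α) - t₁^(1-α)) * |I0|) := by
      rw [abs_mul, abs_mul, abs_of_nonneg (by positivity : (0:ℝ) ≤ 1/Real.Gamma α),
        abs_of_nonneg hr1]
    have hB3 : |(1/Real.Gamma α) * (t₁^(1-α) * (Id1 + Id2))|
        ≤ (1/Real.Gamma α) * (t₁^(1-α) * (|Id1| + |Id2|)) := by
      rw [abs_mul, abs_mul, abs_of_nonneg (by positivity : (0:ℝ) ≤ 1/Real.Gamma α),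
        abs_of_nonneg (Real.rpow_nonneg h10 _)]
      exact mul_le_mul_of_nonneg_left (mul_le_mul_of_nonneg_left (abs_add_le _ _)
        (Real.rpow_nonneg h10 _)) (by positivity)
    calc |(1/Real.Gamma α) * (t₂^(1-α) * I1)
          + (1/Real.Gamma α) * ((t₂^(1-α) - t₁^(1-α)) * I0)
          + (1/Real.Gamma α) * (t₁^(1-α) * (Id1 + Id2))|
        ≤ |(1/Real.Gamma α) * (t₂^(1-α) * I1)
            + (1/Real.Gamma α) * ((t₂^(1-α) - t₁^(1-α)) * I0)|
          + |(1/Real.Gamma α) * (t₁^(1-α) * (Id1 + Id2))| := abs_add_le _ _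
      _ ≤ |(1/Real.Gamma α) * (t₂^(1-α) * I1)|
          + |(1/Real.Gamma α) * ((t₂^(1-α) - t₁^(1-α)) * I0)|
          + |(1/Real.Gamma α) * (t₁^(1-α) * (Id1 + Id2))| := by
            have := abs_add_le ((1/Real.Gamma α) * (t₂^(1-α) * I1))
              ((1/Real.Gamma α) * ((t₂^(1-α) - t₁^(1-α)) * I0))
            linarith [this]
      _ ≤ (1/Real.Gamma α) * (t₂^(1-α) * |I1|)
          + (1/Real.Gamma α) * ((t₂^(1-α) - t₁^(1-α)) * |I0|)
          + (1/Real.Gamma α) * (t₁^(1-α) * (|Id1| + |Id2|)) := by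
            exact add_le_add (add_le_add hB1 hB2) hB3
      _ ≤ (1/Real.Gamma α) * (2 * (M * (t₂ - t₁)^α / α))
          + (1/Real.Gamma α) * (4 * (M * (t₂ - t₁)^α / α))
          + (1/Real.Gamma α) * (4 * (M * (t₂ - t₁)^α / α) + 2 * (M * (t₂ - t₁)^α / α)) := by
            have hmul : t₁^(1-α) * (|Id1| + |Id2|) = t₁^(1-α) * |Id1| + t₁^(1-α) * |Id2| := by
              ring
            refine add_le_add (add_le_add ?_ ?_) ?_
            · exact mul_le_mul_of_nonneg_left T1 (by positivity)
            · exact mul_le_mul_of_nonneg_left T2 (by positivity)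
            · refine mul_le_mul_of_nonneg_left ?_ (by positivity)
              rw [hmul]
              exact add_le_add T3 T4
      _ = 12 / (α * Real.Gamma α) * M * (t₂ - t₁) ^ α := by
            ring

private lemma EST2 {α T M : ℝ} {f' : ℝ → ℝ} (hα0 : 0 < α) (hα1 : α < 1) (hM0 : 0 ≤ M)
    (hf' : AEStronglyMeasurable f' (volume.restrict (Set.Ioc 0 T)))
    (hM : ∀ᵐ τ ∂(volume.restrict (Set.Ioo 0 T)), |f' τ| ≤ M * τ ^ (α - 1))
    {a : ℝ} (ha0 : 0 < a)
    {t₁ t₂ : ℝ} (h1a : a ≤ t₁) (h2T : t₂ ≤ T) (h12 : t₁ ≤ t₂) :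
    |fracInt (1-α) f' t₂ - fracInt (1-α) f' t₁|
      ≤ (1/Real.Gamma (1-α)) * M
          * (T^α * (a/2)⁻¹/α + (a/2)^(α-1)/(1-α) + a^(α-1)/(1-α))
        * (t₂ - t₁)^(1-α) := by
  have hβ0 : (0:ℝ) < 1 - α := by linarith
  have hΓ : 0 < Real.Gamma (1-α) := Real.Gamma_pos_of_pos hβ0
  have hexp2 : (-1:ℝ) < -α := by linarith
  have hexp : (-1:ℝ) < α - 1 := by linarith
  have ha2 : 0 < a/2 := half_pos ha0
  have ht₁ : 0 < t₁ := lt_of_lt_of_le ha0 h1a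
  have h1T : t₁ ≤ T := le_trans h12 h2T
  have hKnn : (0:ℝ) ≤ (1/Real.Gamma (1-α)) * M
      * (T^α * (a/2)⁻¹/α + (a/2)^(α-1)/(1-α) + a^(α-1)/(1-α)) := by
    have hT0 : (0:ℝ) ≤ T := le_trans ht₁.le h1T
    have n1 : (0:ℝ) ≤ T^α * (a/2)⁻¹/α :=
      div_nonneg (mul_nonneg (Real.rpow_nonneg hT0 _) (inv_nonneg.2 ha2.le)) hα0.le
    have n2 : (0:ℝ) ≤ (a/2)^(α-1)/(1-α) :=
      div_nonneg (Real.rpow_nonneg ha2.le _) hβ0.le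
    have n3 : (0:ℝ) ≤ a^(α-1)/(1-α) :=
      div_nonneg (Real.rpow_nonneg ha0.le _) hβ0.le
    have := add_nonneg (add_nonneg n1 n2) n3
    positivity
  rcases eq_or_lt_of_le h12 with rfl | hlt
  · rw [sub_self, sub_self, abs_zero, Real.zero_rpow hβ0.ne', mul_zero]
  have hpos : (0:ℝ) < t₂ - t₁ := sub_pos.2 hlt
  -- MB instances
  have Q1 : ∀ c : ℝ, t₁ ≤ c → c ≤ T →
      IntervalIntegrable (fun τ => (c - τ) ^ (-α) * f' τ) volume 0 (a/2) ∧
        |∫ τ in (0:ℝ)..(a/2), (c - τ) ^ (-α) * f' τ|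
          ≤ |∫ τ in (0:ℝ)..(a/2), (a/2) ^ (-α) * (M * τ ^ (α-1))| := by
    intro c h1c hcT
    exact MB (α := α) hf' hM (le_refl (0:ℝ)) ha2.le (by linarith)
      (K := fun τ => (c - τ) ^ (-α))
      (G := fun τ => (a/2) ^ (-α) * (M * τ ^ (α-1)))
      (ker_cont (fun τ hτ => by intro hc; rw [hc] at hτ; exact absurd hτ.2 (by linarith)))
      (fun τ hτ => by
        rw [abs_of_nonneg (Real.rpow_nonneg (by linarith [hτ.2] : (0:ℝ) ≤ c - τ) _)]
        exact mul_le_mul_of_nonneg_right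
          (Real.rpow_le_rpow_of_nonpos ha2 (by linarith [hτ.2]) (by linarith))
          (mul_nonneg hM0 (Real.rpow_nonneg hτ.1.le _)))
      (((intervalIntegrable_rpow' hexp).const_mul M).const_mul _)
  have Q2 : ∀ c : ℝ, t₁ ≤ c → c ≤ T →
      IntervalIntegrable (fun τ => (c - τ) ^ (-α) * f' τ) volume (a/2) t₁ ∧
        |∫ τ in (a/2)..t₁, (c - τ) ^ (-α) * f' τ|
          ≤ |∫ τ in (a/2)..t₁, (t₁ - τ) ^ (-α) * (M * (a/2) ^ (α-1))| := by
    intro c h1c hcT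
    exact MB (α := α) hf' hM ha2.le (by linarith) h1T
      (K := fun τ => (c - τ) ^ (-α))
      (G := fun τ => (t₁ - τ) ^ (-α) * (M * (a/2) ^ (α-1)))
      (ker_cont (fun τ hτ => by intro hc; rw [hc] at hτ; exact absurd hτ.2 (by linarith)))
      (fun τ hτ => by
        rw [abs_of_nonneg (Real.rpow_nonneg (by linarith [hτ.2] : (0:ℝ) ≤ c - τ) _)]
        exact mul_le_mul
          (Real.rpow_le_rpow_of_nonpos (by linarith [hτ.2] : (0:ℝ) < t₁ - τ)
            (by linarith) (by linarith))
          (mul_le_mul_of_nonneg_left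
            (Real.rpow_le_rpow_of_nonpos ha2 hτ.1.le (by linarith)) hM0)
          (mul_nonneg hM0 (Real.rpow_nonneg (lt_trans ha2 hτ.1).le _))
          (Real.rpow_nonneg (by linarith [hτ.2]) _))
      ((ker_intable hexp2 t₁ _ _).mul_const _)
  have iiC : ∀ c : ℝ, t₁ ≤ c → c ≤ T →
      IntervalIntegrable (fun τ => (c - τ) ^ (-α) * f' τ) volume 0 t₁ :=
    fun c h1c hcT => ((Q1 c h1c hcT).1).trans ((Q2 c h1c hcT).1)
  have RE1 := MB (α := α) hf' hM (le_of_lt ht₁) h12 h2T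
    (K := fun τ => (t₂ - τ) ^ (-α))
    (G := fun τ => (t₂ - τ) ^ (-α) * (M * a ^ (α-1)))
    (ker_cont (fun τ hτ => by intro hc; rw [hc] at hτ; exact absurd hτ.2 (lt_irrefl _)))
    (fun τ hτ => by
      rw [abs_of_nonneg (Real.rpow_nonneg (by linarith [hτ.2] : (0:ℝ) ≤ t₂ - τ) _)]
      exact mul_le_mul_of_nonneg_left
        (mul_le_mul_of_nonneg_left
          (Real.rpow_le_rpow_of_nonpos ha0 (by linarith [hτ.1]) (by linarith)) hM0)
        (Real.rpow_nonneg (by linarith [hτ.2]) _))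
    ((ker_intable hexp2 t₂ _ _).mul_const _)
  have RE2a := MB (α := α) hf' hM (le_refl (0:ℝ)) ha2.le (by linarith)
    (K := fun τ => (t₂ - τ) ^ (-α) - (t₁ - τ) ^ (-α))
    (G := fun τ => ((a/2) ^ (-α-1) * (t₂ - t₁)) * (M * τ ^ (α-1)))
    (((ker_cont (fun τ hτ => by intro hc; rw [hc] at hτ; exact absurd hτ.2 (by linarith))).sub
      (ker_cont (fun τ hτ => by intro hc; rw [hc] at hτ; exact absurd hτ.2 (by linarith)))))
    (fun τ hτ => by
      have h1τ : 0 < t₁ - τ := by linarith [hτ.2]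
      have mv := rpow_mvt (p := -α) (x := t₁ - τ) (y := t₂ - τ) h1τ
        (by linarith) (by linarith)
      have e : |(t₂ - τ) ^ (-α) - (t₁ - τ) ^ (-α)| ≤ (a/2) ^ (-α-1) * (t₂ - t₁) := by
        have e1 : |(-α)| ≤ 1 := by rw [abs_of_nonpos (by linarith)]; linarith
        have e2 : (t₁ - τ)^(-α-1) ≤ (a/2)^(-α-1) :=
          Real.rpow_le_rpow_of_nonpos ha2 (by linarith [hτ.2]) (by linarith)
        have e3 : t₂ - τ - (t₁ - τ) = t₂ - t₁ := by ring
        rw [e3] at mv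
        calc |(t₂ - τ) ^ (-α) - (t₁ - τ) ^ (-α)|
            ≤ |(-α)| * (t₁ - τ)^(-α-1) * (t₂ - t₁) := mv
          _ ≤ 1 * ((a/2)^(-α-1)) * (t₂ - t₁) := by
              apply mul_le_mul_of_nonneg_right _ hpos.le
              exact mul_le_mul e1 e2 (Real.rpow_nonneg h1τ.le _) one_pos.le
          _ = (a/2) ^ (-α-1) * (t₂ - t₁) := by ring
      exact mul_le_mul_of_nonneg_right e (mul_nonneg hM0 (Real.rpow_nonneg hτ.1.le _)))
    (((intervalIntegrable_rpow' hexp).const_mul M).const_mul _)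
  have RE2b := MB (α := α) hf' hM ha2.le (by linarith : a/2 ≤ t₁) h1T
    (K := fun τ => (t₂ - τ) ^ (-α) - (t₁ - τ) ^ (-α))
    (G := fun τ => ((t₁ - τ) ^ (-α) - (t₂ - τ) ^ (-α)) * (M * (a/2) ^ (α-1)))
    (((ker_cont (fun τ hτ => by intro hc; rw [hc] at hτ; exact absurd hτ.2 (by linarith))).sub
      (ker_cont (fun τ hτ => by intro hc; rw [hc] at hτ; exact absurd hτ.2 (by linarith)))))
    (fun τ hτ => by
      have h1τ : 0 < t₁ - τ := by linarith [hτ.2]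
      have habs : |(t₂ - τ) ^ (-α) - (t₁ - τ) ^ (-α)|
          = (t₁ - τ) ^ (-α) - (t₂ - τ) ^ (-α) := by
        rw [abs_of_nonpos (sub_nonpos.2
          (Real.rpow_le_rpow_of_nonpos h1τ (by linarith) (by linarith))), neg_sub]
      rw [habs]
      have hKnn2 : (0:ℝ) ≤ (t₁ - τ) ^ (-α) - (t₂ - τ) ^ (-α) := by
        rw [← habs]; exact abs_nonneg _
      exact mul_le_mul_of_nonneg_left
        (mul_le_mul_of_nonneg_left
          (Real.rpow_le_rpow_of_nonpos ha2 hτ.1.le (by linarith)) hM0) hKnn2)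
    (((ker_intable hexp2 t₁ _ _).sub (ker_intable hexp2 t₂ _ _)).mul_const _)
  -- values
  have VE1 : ∫ τ in t₁..t₂, (t₂ - τ) ^ (-α) * (M * a ^ (α-1))
      = ((t₂ - t₁)^(1-α)/(1-α)) * (M * a ^ (α-1)) := by
    rw [intervalIntegral.integral_mul_const, ker_int hexp2 t₂ t₁ t₂,
      show -α + 1 = 1 - α from by ring, sub_self, Real.zero_rpow hβ0.ne']
    ring
  have VE2a : ∫ τ in (0:ℝ)..(a/2), ((a/2) ^ (-α-1) * (t₂ - t₁)) * (M * τ ^ (α-1))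
      = ((a/2) ^ (-α-1) * (t₂ - t₁)) * (M * ((a/2)^α/α)) := by
    rw [intervalIntegral.integral_const_mul, intervalIntegral.integral_const_mul,
      integral_rpow (Or.inl hexp), show α - 1 + 1 = α from by ring,
      Real.zero_rpow hα0.ne']
    ring
  have VE2b : ∫ τ in (a/2)..t₁, ((t₁ - τ) ^ (-α) - (t₂ - τ) ^ (-α)) * (M * (a/2) ^ (α-1))
      = (((t₁ - a/2)^(1-α) - ((t₂ - a/2)^(1-α) - (t₂ - t₁)^(1-α)))/(1-α))
          * (M * (a/2) ^ (α-1)) := by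
    rw [intervalIntegral.integral_mul_const, intervalIntegral.integral_sub
      (ker_intable hexp2 t₁ _ _) (ker_intable hexp2 t₂ _ _), ker_int hexp2 t₁ (a/2) t₁,
      ker_int hexp2 t₂ (a/2) t₁, show -α + 1 = 1 - α from by ring, sub_self,
      Real.zero_rpow hβ0.ne']
    ring
  have hXnn : (0:ℝ) ≤ (t₁ - a/2)^(1-α) - ((t₂ - a/2)^(1-α) - (t₂ - t₁)^(1-α)) := by
    have hsub : (t₂ - a/2)^(1-α) ≤ (t₁ - a/2)^(1-α) + (t₂ - t₁)^(1-α) := by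
      rw [show t₂ - a/2 = (t₁ - a/2) + (t₂ - t₁) from by ring]
      exact rpow_subadd (by linarith) hpos.le hβ0.le (by linarith)
    linarith
  have hXle : (t₁ - a/2)^(1-α) - ((t₂ - a/2)^(1-α) - (t₂ - t₁)^(1-α)) ≤ (t₂ - t₁)^(1-α) := by
    have hmono : (t₁ - a/2)^(1-α) ≤ (t₂ - a/2)^(1-α) :=
      Real.rpow_le_rpow (by linarith) (by linarith) hβ0.le
    linarith
  -- bounds
  have bE1 : |∫ τ in t₁..t₂, (t₂ - τ) ^ (-α) * f' τ|
      ≤ ((t₂ - t₁)^(1-α)/(1-α)) * (M * a ^ (α-1)) := by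
    have h2 := RE1.2
    rw [VE1, abs_of_nonneg (mul_nonneg (div_nonneg (Real.rpow_nonneg hpos.le _) hβ0.le)
      (mul_nonneg hM0 (Real.rpow_nonneg ha0.le _)))] at h2
    exact h2
  have bE2a : |∫ τ in (0:ℝ)..(a/2), ((t₂ - τ) ^ (-α) - (t₁ - τ) ^ (-α)) * f' τ|
      ≤ ((a/2) ^ (-α-1) * (t₂ - t₁)) * (M * ((a/2)^α/α)) := by
    have h2 := RE2a.2
    rw [VE2a, abs_of_nonneg (mul_nonneg (mul_nonneg (Real.rpow_nonneg ha2.le _) hpos.le)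
      (mul_nonneg hM0 (div_nonneg (Real.rpow_nonneg ha2.le _) hα0.le)))] at h2
    exact h2
  have bE2b : |∫ τ in (a/2)..t₁, ((t₂ - τ) ^ (-α) - (t₁ - τ) ^ (-α)) * f' τ|
      ≤ ((t₂ - t₁)^(1-α)/(1-α)) * (M * (a/2) ^ (α-1)) := by
    have h2 := RE2b.2
    rw [VE2b, abs_of_nonneg (mul_nonneg (div_nonneg hXnn hβ0.le)
      (mul_nonneg hM0 (Real.rpow_nonneg ha2.le _)))] at h2
    refine h2.trans (mul_le_mul_of_nonneg_right ?_
      (mul_nonneg hM0 (Real.rpow_nonneg ha2.le _)))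
    exact (div_le_div_iff_of_pos_right hβ0).mpr hXle
  -- decomposition
  have hJ2 : (∫ τ in (0:ℝ)..t₂, (t₂ - τ) ^ (-α) * f' τ)
      = (∫ τ in (0:ℝ)..t₁, (t₂ - τ) ^ (-α) * f' τ)
        + ∫ τ in t₁..t₂, (t₂ - τ) ^ (-α) * f' τ :=
    (integral_add_adjacent_intervals (iiC t₂ h12 h2T) RE1.1).symm
  have hDd : (∫ τ in (0:ℝ)..(a/2), ((t₂ - τ) ^ (-α) - (t₁ - τ) ^ (-α)) * f' τ)
        + (∫ τ in (a/2)..t₁, ((t₂ - τ) ^ (-α) - (t₁ - τ) ^ (-α)) * f' τ)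
      = (∫ τ in (0:ℝ)..t₁, (t₂ - τ) ^ (-α) * f' τ)
        - ∫ τ in (0:ℝ)..t₁, (t₁ - τ) ^ (-α) * f' τ := by
    rw [integral_add_adjacent_intervals RE2a.1 RE2b.1,
      show (fun τ => ((t₂ - τ) ^ (-α) - (t₁ - τ) ^ (-α)) * f' τ)
        = fun τ => (t₂ - τ) ^ (-α) * f' τ - (t₁ - τ) ^ (-α) * f' τ
        from funext fun τ => by ring]
    exact intervalIntegral.integral_sub (iiC t₂ h12 h2T) (iiC t₁ le_rfl h1T)
  have hdec : fracInt (1-α) f' t₂ - fracInt (1-α) f' t₁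
      = (1/Real.Gamma (1-α)) * (∫ τ in t₁..t₂, (t₂ - τ) ^ (-α) * f' τ)
        + (1/Real.Gamma (1-α))
            * ((∫ τ in (0:ℝ)..(a/2), ((t₂ - τ) ^ (-α) - (t₁ - τ) ^ (-α)) * f' τ)
              + (∫ τ in (a/2)..t₁, ((t₂ - τ) ^ (-α) - (t₁ - τ) ^ (-α)) * f' τ)) := by
    simp only [fracInt, show (1:ℝ) - α - 1 = -α from by ring]
    rw [hJ2, hDd]
    ring
  -- arithmetic for the E2a term
  have q1 : (a/2) ^ (-α-1:ℝ) * (a/2)^α = (a/2)⁻¹ := by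
    rw [← Real.rpow_add ha2, show -α-1+α = -1 from by ring, Real.rpow_neg_one]
  have hhT : t₂ - t₁ ≤ T^α * (t₂-t₁)^(1-α) := by
    have e1 : (t₂-t₁)^α * (t₂-t₁)^(1-α) = t₂-t₁ := by
      rw [← Real.rpow_add hpos, show α+(1-α) = 1 from by ring, Real.rpow_one]
    have e2 : (t₂-t₁)^α ≤ T^α :=
      Real.rpow_le_rpow hpos.le (by linarith) hα0.le
    calc t₂ - t₁ = (t₂-t₁)^α * (t₂-t₁)^(1-α) := e1.symm
      _ ≤ T^α * (t₂-t₁)^(1-α) :=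
          mul_le_mul_of_nonneg_right e2 (Real.rpow_nonneg hpos.le _)
  have bE2a' : |∫ τ in (0:ℝ)..(a/2), ((t₂ - τ) ^ (-α) - (t₁ - τ) ^ (-α)) * f' τ|
      ≤ (T^α * (a/2)⁻¹/α) * M * (t₂ - t₁)^(1-α) := by
    refine bE2a.trans ?_
    calc ((a/2) ^ (-α-1:ℝ) * (t₂ - t₁)) * (M * ((a/2)^α/α))
        = ((a/2) ^ (-α-1:ℝ) * (a/2)^α) * (M * (t₂-t₁)/α) := by ring
      _ = (a/2)⁻¹ * (M * (t₂-t₁)/α) := by rw [q1]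
      _ ≤ (a/2)⁻¹ * (M * (T^α * (t₂-t₁)^(1-α))/α) := by
          refine mul_le_mul_of_nonneg_left ?_ (inv_nonneg.2 ha2.le)
          exact (div_le_div_iff_of_pos_right hα0).mpr (mul_le_mul_of_nonneg_left hhT hM0)
      _ = (T^α * (a/2)⁻¹/α) * M * (t₂ - t₁)^(1-α) := by ring
  rw [hdec]
  calc |(1/Real.Gamma (1-α)) * (∫ τ in t₁..t₂, (t₂ - τ) ^ (-α) * f' τ)
        + (1/Real.Gamma (1-α))
            * ((∫ τ in (0:ℝ)..(a/2), ((t₂ - τ) ^ (-α) - (t₁ - τ) ^ (-α)) * f' τ)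
              + (∫ τ in (a/2)..t₁, ((t₂ - τ) ^ (-α) - (t₁ - τ) ^ (-α)) * f' τ))|
      ≤ (1/Real.Gamma (1-α)) * |∫ τ in t₁..t₂, (t₂ - τ) ^ (-α) * f' τ|
        + (1/Real.Gamma (1-α))
            * (|∫ τ in (0:ℝ)..(a/2), ((t₂ - τ) ^ (-α) - (t₁ - τ) ^ (-α)) * f' τ|
              + |∫ τ in (a/2)..t₁, ((t₂ - τ) ^ (-α) - (t₁ - τ) ^ (-α)) * f' τ|) := by
        have t1 := abs_add_le ((1/Real.Gamma (1-α)) * (∫ τ in t₁..t₂, (t₂ - τ) ^ (-α) * f' τ))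
          ((1/Real.Gamma (1-α))
            * ((∫ τ in (0:ℝ)..(a/2), ((t₂ - τ) ^ (-α) - (t₁ - τ) ^ (-α)) * f' τ)
              + (∫ τ in (a/2)..t₁, ((t₂ - τ) ^ (-α) - (t₁ - τ) ^ (-α)) * f' τ)))
        have t2 := abs_add_le (∫ τ in (0:ℝ)..(a/2), ((t₂ - τ) ^ (-α) - (t₁ - τ) ^ (-α)) * f' τ)
          (∫ τ in (a/2)..t₁, ((t₂ - τ) ^ (-α) - (t₁ - τ) ^ (-α)) * f' τ)
        have hg : (0:ℝ) ≤ 1/Real.Gamma (1-α) := by positivity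
        have t3 : |(1/Real.Gamma (1-α)) * (∫ τ in t₁..t₂, (t₂ - τ) ^ (-α) * f' τ)|
            = (1/Real.Gamma (1-α)) * |∫ τ in t₁..t₂, (t₂ - τ) ^ (-α) * f' τ| := by
          rw [abs_mul, abs_of_nonneg hg]
        have t4 : |(1/Real.Gamma (1-α))
            * ((∫ τ in (0:ℝ)..(a/2), ((t₂ - τ) ^ (-α) - (t₁ - τ) ^ (-α)) * f' τ)
              + (∫ τ in (a/2)..t₁, ((t₂ - τ) ^ (-α) - (t₁ - τ) ^ (-α)) * f' τ))|
            = (1/Real.Gamma (1-α))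
              * |(∫ τ in (0:ℝ)..(a/2), ((t₂ - τ) ^ (-α) - (t₁ - τ) ^ (-α)) * f' τ)
                + (∫ τ in (a/2)..t₁, ((t₂ - τ) ^ (-α) - (t₁ - τ) ^ (-α)) * f' τ)| := by
          rw [abs_mul, abs_of_nonneg hg]
        rw [t3, t4] at t1
        refine t1.trans ?_
        have := mul_le_mul_of_nonneg_left t2 hg
        linarith
    _ ≤ (1/Real.Gamma (1-α)) * (((t₂ - t₁)^(1-α)/(1-α)) * (M * a ^ (α-1)))
        + (1/Real.Gamma (1-α)) * ((T^α * (a/2)⁻¹/α) * M * (t₂ - t₁)^(1-α)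
            + ((t₂ - t₁)^(1-α)/(1-α)) * (M * (a/2) ^ (α-1))) := by
        have hg : (0:ℝ) ≤ 1/Real.Gamma (1-α) := by positivity
        exact add_le_add (mul_le_mul_of_nonneg_left bE1 hg)
          (mul_le_mul_of_nonneg_left (add_le_add bE2a' bE2b) hg)
    _ = (1/Real.Gamma (1-α)) * M
          * (T^α * (a/2)⁻¹/α + (a/2)^(α-1)/(1-α) + a^(α-1)/(1-α))
        * (t₂ - t₁)^(1-α) := by ring

/-- Let `α ∈ (0,1)`. There is a constant `c₀ = c₀(α)` such that for every
`T > 0` and every absolutely continuous `f` on `[0,T]` (with a.e. derivative `f'`) with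
`‖t^{1-α} f'‖_{L^∞(0,T)} ≤ M`, one has
`|t₂^{1-α}(I^α f')(t₂) − t₁^{1-α}(I^α f')(t₁)| ≤ c₀ M (t₂−t₁)^α` for `0 ≤ t₁ ≤ t₂ ≤ T`.
In particular `t ↦ t^{1-α}(I^α f')(t)` is `α`-Hölder on `[0,T]` and
`D^α f = I^{1-α} f'` is `(1-α)`-Hölder on every `[a,T] ⊆ (0,T]`. -/
theorem stmt_12 (α : ℝ) (hα : α ∈ Set.Ioo (0:ℝ) 1) :
    ∃ c₀ > (0:ℝ), ∀ T > (0:ℝ), ∀ f f' : ℝ → ℝ, ∀ M : ℝ,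
      IntegrableOn f' (Set.Icc 0 T) →
      (∀ t ∈ Set.Icc (0:ℝ) T, f t = f 0 + ∫ τ in (0:ℝ)..t, f' τ) →
      (∀ᵐ t ∂(volume.restrict (Set.Ioo 0 T)), |t ^ (1 - α) * f' t| ≤ M) →
      (∀ t₁ ∈ Set.Icc (0:ℝ) T, ∀ t₂ ∈ Set.Icc (0:ℝ) T, t₁ ≤ t₂ →
          |t₂ ^ (1 - α) * fracInt α f' t₂ - t₁ ^ (1 - α) * fracInt α f' t₁|
            ≤ c₀ * M * (t₂ - t₁) ^ α) ∧
        (∃ C : ℝ≥0, HolderOnWith C α.toNNReal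
            (fun t => t ^ (1 - α) * fracInt α f' t) (Set.Icc 0 T)) ∧
        (∀ a ∈ Set.Ioo (0:ℝ) T, ∃ C : ℝ≥0, HolderOnWith C (1 - α).toNNReal
            (fun t => fracInt (1 - α) f' t) (Set.Icc a T)) := by
  obtain ⟨hα0, hα1⟩ := hα
  have hβ0 : (0:ℝ) < 1 - α := by linarith
  have hΓ : 0 < Real.Gamma α := Real.Gamma_pos_of_pos hα0
  have hΓ' : 0 < Real.Gamma (1-α) := Real.Gamma_pos_of_pos hβ0
  refine ⟨12 / (α * Real.Gamma α), by positivity, ?_⟩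
  intro T hT f f' M hint hfund hM
  have hM0 : 0 ≤ M := by
    by_contra hneg
    have h2 : ∀ᵐ τ ∂(volume.restrict (Set.Ioo 0 T)), False :=
      hM.mono fun τ hτ => hneg (le_trans (abs_nonneg _) hτ)
    rw [Filter.eventually_false_iff_eq_bot] at h2
    have h3 : volume.restrict (Set.Ioo 0 T) = 0 := ae_eq_bot.mp h2
    have h4 : volume (Set.Ioo (0:ℝ) T) = 0 := by
      rw [← Measure.restrict_apply_self, h3]; simp
    rw [Real.volume_Ioo] at h4
    rw [ENNReal.ofReal_eq_zero] at h4
    linarith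
  have hf'm : AEStronglyMeasurable f' (volume.restrict (Set.Ioc 0 T)) :=
    hint.aestronglyMeasurable.mono_measure
      (Measure.restrict_mono Set.Ioc_subset_Icc_self le_rfl)
  have hM' : ∀ᵐ τ ∂(volume.restrict (Set.Ioo 0 T)), |f' τ| ≤ M * τ ^ (α - 1) := by
    rw [ae_restrict_iff' measurableSet_Ioo] at hM ⊢
    filter_upwards [hM] with τ h hτ
    have hτ0 : (0:ℝ) < τ := hτ.1
    have e1 : τ ^ (α-1) * τ ^ (1-α) = 1 := by
      rw [← Real.rpow_add hτ0, show α-1+(1-α) = 0 from by ring, Real.rpow_zero]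
    have h2 : τ^(1-α) * |f' τ| ≤ M := by
      have h3 := h hτ
      rwa [abs_mul, abs_of_nonneg (Real.rpow_nonneg hτ0.le _)] at h3
    calc |f' τ| = (τ^(α-1) * τ^(1-α)) * |f' τ| := by rw [e1, one_mul]
      _ = τ^(α-1) * (τ^(1-α) * |f' τ|) := by ring
      _ ≤ τ^(α-1) * M := mul_le_mul_of_nonneg_left h2 (Real.rpow_nonneg hτ0.le _)
      _ = M * τ^(α-1) := by ring
  refine ⟨?_, ?_, ?_⟩
  · intro t₁ h1 t₂ h2 h12
    exact EST1 hα0 hα1 hM0 hf'm hM' h1.1 h2.2 h12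
  · refine ⟨(12 / (α * Real.Gamma α) * M).toNNReal, ?_⟩
    have key : ∀ u v : ℝ, u ∈ Set.Icc (0:ℝ) T → v ∈ Set.Icc (0:ℝ) T → u ≤ v →
        edist ((fun t => t ^ (1-α) * fracInt α f' t) u)
            ((fun t => t ^ (1-α) * fracInt α f' t) v)
          ≤ ((12 / (α * Real.Gamma α) * M).toNNReal : ℝ≥0∞)
              * edist u v ^ (α.toNNReal : ℝ) := by
      intro u v hu hv huv
      have hb := EST1 hα0 hα1 hM0 hf'm hM' hu.1 hv.2 huv
      rw [edist_dist, edist_dist, Real.dist_eq, Real.dist_eq]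
      have h1 : |u ^ (1-α) * fracInt α f' u - v ^ (1-α) * fracInt α f' v| ≤
          12 / (α * Real.Gamma α) * M * (v - u) ^ α := by rwa [abs_sub_comm] at hb
      have h2 : |u - v| = v - u := by rw [abs_sub_comm, abs_of_nonneg (sub_nonneg.2 huv)]
      rw [h2]
      calc ENNReal.ofReal |u ^ (1-α) * fracInt α f' u - v ^ (1-α) * fracInt α f' v|
          ≤ ENNReal.ofReal (12 / (α * Real.Gamma α) * M * (v - u) ^ α) :=
            ENNReal.ofReal_le_ofReal h1
        _ = ENNReal.ofReal (12 / (α * Real.Gamma α) * M) * ENNReal.ofReal ((v - u) ^ α) :=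
            ENNReal.ofReal_mul (mul_nonneg (by positivity) hM0)
        _ = ((12 / (α * Real.Gamma α) * M).toNNReal : ℝ≥0∞)
              * ENNReal.ofReal (v - u) ^ (α.toNNReal : ℝ) := by
            rw [← ENNReal.ofReal_rpow_of_nonneg (sub_nonneg.2 huv) hα0.le,
              Real.coe_toNNReal α hα0.le]
            rfl
    intro x hx y hy
    rcases le_total x y with hxy | hxy
    · exact key x y hx hy hxy
    · have h5 := key y x hy hx hxy
      rwa [edist_comm, edist_comm y x] at h5
  · intro a ha
    set KK := (1/Real.Gamma (1-α)) * M
        * (T^α * (a/2)⁻¹/α + (a/2)^(α-1)/(1-α) + a^(α-1)/(1-α)) with hKK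
    have ha0 : (0:ℝ) < a := ha.1
    have ha2 : (0:ℝ) < a/2 := half_pos ha0
    have hKnn : (0:ℝ) ≤ KK := by
      have n1 : (0:ℝ) ≤ T^α * (a/2)⁻¹/α :=
        div_nonneg (mul_nonneg (Real.rpow_nonneg (by linarith [ha.2] : (0:ℝ) ≤ T) _)
          (inv_nonneg.2 ha2.le)) hα0.le
      have n2 : (0:ℝ) ≤ (a/2)^(α-1)/(1-α) :=
        div_nonneg (Real.rpow_nonneg ha2.le _) hβ0.le
      have n3 : (0:ℝ) ≤ a^(α-1)/(1-α) :=
        div_nonneg (Real.rpow_nonneg ha0.le _) hβ0.le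
      have hsum := add_nonneg (add_nonneg n1 n2) n3
      exact mul_nonneg (mul_nonneg (by positivity) hM0) hsum
    refine ⟨KK.toNNReal, ?_⟩
    have key : ∀ u v : ℝ, u ∈ Set.Icc a T → v ∈ Set.Icc a T → u ≤ v →
        edist ((fun t => fracInt (1-α) f' t) u) ((fun t => fracInt (1-α) f' t) v)
          ≤ (KK.toNNReal : ℝ≥0∞) * edist u v ^ ((1-α).toNNReal : ℝ) := by
      intro u v hu hv huv
      have hb := EST2 hα0 hα1 hM0 hf'm hM' ha0 hu.1 hv.2 huv
      rw [edist_dist, edist_dist, Real.dist_eq, Real.dist_eq]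
      have h1 : |fracInt (1-α) f' u - fracInt (1-α) f' v| ≤ KK * (v - u) ^ (1-α) := by
        rw [abs_sub_comm]; exact hb
      have h2 : |u - v| = v - u := by rw [abs_sub_comm, abs_of_nonneg (sub_nonneg.2 huv)]
      rw [h2]
      calc ENNReal.ofReal |fracInt (1-α) f' u - fracInt (1-α) f' v|
          ≤ ENNReal.ofReal (KK * (v - u) ^ (1-α)) := ENNReal.ofReal_le_ofReal h1
        _ = ENNReal.ofReal KK * ENNReal.ofReal ((v - u) ^ (1-α)) :=
            ENNReal.ofReal_mul hKnn
        _ = (KK.toNNReal : ℝ≥0∞) * ENNReal.ofReal (v - u) ^ ((1-α).toNNReal : ℝ) := by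
            rw [← ENNReal.ofReal_rpow_of_nonneg (sub_nonneg.2 huv) hβ0.le,
              Real.coe_toNNReal _ hβ0.le]
            rfl
    intro x hx y hy
    rcases le_total x y with hxy | hxy
    · exact key x y hx hy hxy
    · have h5 := key y x hy hx hxy
      rwa [edist_comm, edist_comm y x] at h5
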